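/- In the standard juggling chain on landing states with h and f fixed, the chain is irreducible: for any two landing states ν, ω ∈ {0,1}^h with exactly f zeros each, there is a finite sequence of legal transitions (edges of G_{h,f}) from ν to ω. -/

import Mathlib

open Finset
open scoped Classical

/-- Stirling numbers of the second kind. -/
def stirling : ℕ → ℕ → ℕ
  | 0, 0 => 1
  | 0, _ + 1 => 0
  | _ + 1, 0 => 0
  | n + 1, k + 1 => (k + 1) * stirling n (k + 1) + stirling n k

/-- Bell numbers. -/
def bellNum (n : ℕ) : ℕ := ∑ k ∈ Finset.range (n + 1), stirling n k

/-- A TL-state of length `h`: `ν t = 0` means no ball lands at (1-based) time `t+1`;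
otherwise `ν t` is the airtime of the ball landing at time `t+1`, which must be `≥ t+1`,
and no two balls were thrown at the same instant. -/
def IsTL (h : ℕ) (ν : Fin h → Fin (h + 1)) : Prop :=
  (∀ t : Fin h, (ν t : ℕ) = 0 ∨ t.val + 1 ≤ (ν t : ℕ)) ∧
  ∀ j k : Fin h, j ≠ k → (ν j : ℕ) ≠ 0 → (ν k : ℕ) ≠ 0 →
    (ν j : ℕ) + k.val ≠ (ν k : ℕ) + j.val

/-- Number of empty slots of a TL-state. -/
def tlZeros {h : ℕ} (ν : Fin h → Fin (h + 1)) : ℕ :=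
  (Finset.univ.filter (fun t : Fin h => (ν t : ℕ) = 0)).card

/-- Number of zeros of a landing state. -/
def numZeros {h : ℕ} (ν : Fin h → Bool) : ℕ :=
  (Finset.univ.filter (fun t : Fin h => ν t = false)).card

/-- `φ_t(ν)` (with `t : Fin h` representing 1-based time `t+1`). -/
def phi {h : ℕ} (ν : Fin h → Bool) (t : Fin h) : ℕ :=
  if ν t = true then
    (Finset.univ.filter (fun j : Fin h => t < j ∧ ν j = false)).card
  else 0

/-- The weight `Δ(ν)`. -/
def Delta {h : ℕ} (ν : Fin h → Bool) : ℕ := ∏ t : Fin h, (1 + phi ν t)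

/-- 1-based access to a landing state, `false` out of range (convention `ν_t = 0` for `t > h`). -/
def getB {h : ℕ} (ν : Fin h → Bool) (j : ℕ) : Bool :=
  if hj : 1 ≤ j ∧ j ≤ h then ν ⟨j - 1, by omega⟩ else false

/-- Throwing operator on landing states: `theta 0` is the left shift (wait), and for
`1 ≤ j`, `theta j` shifts left and places a ball at 1-based position `j`. -/
def theta {h : ℕ} (j : ℕ) (ν : Fin h → Bool) : Fin h → Bool :=
  fun t => if t.val + 1 = j then true else getB ν (t.val + 2)

/-- 1-based access to a TL-state given as a ℕ-valued tuple, `0` out of range. -/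
def getN {h : ℕ} (ν : Fin h → ℕ) (j : ℕ) : ℕ :=
  if hj : 1 ≤ j ∧ j ≤ h then ν ⟨j - 1, by omega⟩ else 0

/-- Throwing operator on ℕ-valued TL-states. -/
def thetaN {h : ℕ} (j : ℕ) (ν : Fin h → ℕ) : Fin h → ℕ :=
  fun t => if t.val + 1 = j then j else getN ν (t.val + 2)

/-- Transition probabilities for the standard juggling chain on landing states. -/
noncomputable def pStd (h f : ℕ) (ν ω : Fin h → Bool) : ℝ :=
  if getB ν 1 = false then (if ω = theta 0 ν then 1 else 0)
  else if ∃ j, 1 ≤ j ∧ j ≤ h ∧ getB ν (j + 1) = false ∧ ω = theta j ν then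
    1 / ((f : ℝ) + 1)
  else 0

/-- The set of landing states with exactly `f` zeros. -/
noncomputable def States (h f : ℕ) : Finset (Fin h → Bool) :=
  Finset.univ.filter (fun ν => numZeros ν = f)

/-- The set of TL-states with exactly `f` empty slots. -/
noncomputable def TLStates (h f : ℕ) : Finset (Fin h → Fin (h + 1)) :=
  Finset.univ.filter (fun ν => IsTL h ν ∧ tlZeros ν = f)

/-- Projection from TL-states to landing states. -/
def proj {h : ℕ} (ν : Fin h → Fin (h + 1)) : Fin h → Bool :=
  fun t => decide ((ν t : ℕ) ≠ 0)

/-- Transition probabilities for the TL-state chain. -/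
noncomputable def pHat (h f : ℕ) (μ ν : Fin h → Fin (h + 1)) : ℝ :=
  if getN (h := h) (fun s => (μ s : ℕ)) 1 = 0 then
    (if (fun s => (ν s : ℕ)) = thetaN 0 (fun s => (μ s : ℕ)) then 1 else 0)
  else if ∃ j, 1 ≤ j ∧ j ≤ h ∧ getN (h := h) (fun s => (μ s : ℕ)) (j + 1) = 0 ∧
      (fun s => (ν s : ℕ)) = thetaN j (fun s => (μ s : ℕ)) then
    1 / ((f : ℝ) + 1)
  else 0

def JR {h : ℕ} (x y : Fin h → Bool) : Prop :=
  (getB x 1 = false ∧ y = theta 0 x) ∨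
  (getB x 1 = true ∧ ∃ j, 1 ≤ j ∧ j ≤ h ∧ getB x (j + 1) = false ∧ y = theta j x)

def rot {h : ℕ} (ν : Fin h → Bool) : Fin h → Bool :=
  fun t => ν ⟨(t.val + 1) % h, Nat.mod_lt _ t.pos⟩

lemma getB_in {h : ℕ} (ν : Fin h → Bool) (j : ℕ) (h1 : 1 ≤ j) (h2 : j ≤ h) :
    getB ν j = ν ⟨j - 1, by omega⟩ := by
  simp [getB, h1, h2]

lemma getB_out {h : ℕ} (ν : Fin h → Bool) (j : ℕ) (h2 : h < j) :
    getB ν j = false := by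
  simp only [getB]; rw [dif_neg]; omega

lemma step_rot {h : ℕ} (h0 : 0 < h) (ν : Fin h → Bool) : JR ν (rot ν) := by
  by_cases hν0 : ν ⟨0, h0⟩ = false
  · left
    constructor
    · rw [getB_in ν 1 le_rfl h0]; exact hν0
    · funext t
      simp only [rot, theta]
      rw [if_neg (by omega)]
      rcases Nat.lt_or_ge (t.val + 1) h with hlt | hge
      · rw [getB_in ν (t.val + 2) (by omega) (by omega)]
        congr 1
        exact Fin.ext (by simp [Nat.mod_eq_of_lt hlt])
      · have h1 : t.val + 1 = h := by omega
        rw [getB_out ν (t.val + 2) (by omega)]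
        have : (t.val + 1) % h = 0 := by rw [h1, Nat.mod_self]
        simp only [this]
        exact hν0
  · right
    refine ⟨by rw [getB_in ν 1 le_rfl h0]; simpa using hν0, h, h0, le_rfl, getB_out ν (h+1) (by omega), ?_⟩
    funext t
    simp only [rot, theta]
    rcases Nat.lt_or_ge (t.val + 1) h with hlt | hge
    · rw [if_neg (by omega), getB_in ν (t.val + 2) (by omega) (by omega)]
      congr 1
      exact Fin.ext (by simp [Nat.mod_eq_of_lt hlt])
    · have h1 : t.val + 1 = h := by omega
      rw [if_pos h1]
      have : (t.val + 1) % h = 0 := by rw [h1, Nat.mod_self]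
      simp only [this]
      simpa using hν0

lemma rot_iter {h : ℕ} (ν : Fin h → Bool) (k : ℕ) (t : Fin h) :
    (rot^[k] ν) t = ν ⟨(t.val + k) % h, Nat.mod_lt _ t.pos⟩ := by
  induction k generalizing ν with
  | zero => simp [Nat.mod_eq_of_lt t.isLt]
  | succ n ih =>
    rw [Function.iterate_succ_apply, ih (rot ν)]
    simp only [rot]
    congr 1
    exact Fin.ext (by simp [Nat.mod_add_mod]; ring_nf)

lemma rot_iter_self {h : ℕ} (ν : Fin h → Bool) : rot^[h] ν = ν := by
  funext t
  rw [rot_iter]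
  congr 1
  exact Fin.ext (by simp [Nat.add_mod_right, Nat.mod_eq_of_lt t.isLt])

lemma reach_rot_iter {h : ℕ} (h0 : 0 < h) (ν : Fin h → Bool) (k : ℕ) :
    Relation.ReflTransGen JR ν (rot^[k] ν) := by
  induction k with
  | zero => exact Relation.ReflTransGen.refl
  | succ n ih => exact ih.tail (by rw [Function.iterate_succ_apply']; exact step_rot h0 _)

lemma step_move {h : ℕ} (h0 : 0 < h) (ν : Fin h → Bool) (c : ℕ) (hc1 : 1 ≤ c) (hc2 : c < h)
    (hν0 : ν ⟨0, h0⟩ = true) (hνc : ν ⟨c, hc2⟩ = false) :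
    JR ν (rot (fun t => if t.val = c then true else if t.val = 0 then false else ν t)) := by
  right
  refine ⟨by rw [getB_in ν 1 le_rfl h0]; exact hν0, c, hc1, le_of_lt hc2,
    by rw [getB_in ν (c+1) (by omega) (by omega)]; simpa using hνc, ?_⟩
  funext t
  simp only [rot, theta]
  rcases Nat.lt_or_ge (t.val + 1) h with hlt | hge
  · have hm : (t.val + 1) % h = t.val + 1 := Nat.mod_eq_of_lt hlt
    simp only [hm]
    by_cases he : t.val + 1 = c
    · simp [he]
    · rw [if_neg he, if_neg he, if_neg (by omega),
        getB_in ν (t.val + 2) (by omega) (by omega)]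
      congr 1
  · have h1 : t.val + 1 = h := by omega
    have : (t.val + 1) % h = 0 := by rw [h1, Nat.mod_self]
    simp [this, getB_out ν (t.val + 2) (by omega), show ¬(0:ℕ) = c from by omega,
      show ¬(t.val + 1 = c) from by omega]

lemma add_mod_inj {h x y k : ℕ} (hx : x < h) (hy : y < h)
    (e : (x + k) % h = (y + k) % h) : x = y := by
  have e' : x ≡ y [MOD h] := Nat.ModEq.add_right_cancel' k e
  rwa [Nat.ModEq, Nat.mod_eq_of_lt hx, Nat.mod_eq_of_lt hy] at e'

lemma reach_swap {h : ℕ} (ν : Fin h → Bool) (a c : Fin h) (hac : a ≠ c)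
    (ha : ν a = true) (hc : ν c = false) :
    Relation.ReflTransGen JR ν
      (fun t => if t = a then false else if t = c then true else ν t) := by
  have h0 : 0 < h := a.pos
  set k := a.val with hk
  have hkh : k < h := a.isLt
  set c' := (c.val + (h - k)) % h with hc'def
  have hc'lt : c' < h := Nat.mod_lt _ h0
  have haeq : (k + (h - k)) % h = 0 := by
    have : k + (h - k) = h := by omega
    rw [this, Nat.mod_self]
  have hceq : (c' + k) % h = c.val := by
    rw [hc'def, Nat.mod_add_mod]
    have : c.val + (h - k) + k = c.val + h := by omega
    rw [this, Nat.add_mod_right]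
    exact Nat.mod_eq_of_lt c.isLt
  have hc'ne : c' ≠ 0 := by
    intro e
    apply hac
    apply Fin.ext
    have e2 : (c.val + (h - k)) % h = (k + (h - k)) % h := by rw [haeq, ← hc'def, e]
    exact (add_mod_inj c.isLt hkh e2).symm
  set ν' := rot^[k] ν with hν'
  have hν'0 : ν' ⟨0, h0⟩ = true := by
    rw [hν', rot_iter]
    convert ha using 2
    exact Fin.ext (by simp [Nat.mod_eq_of_lt hkh]; rfl)
  have hν'c' : ν' ⟨c', hc'lt⟩ = false := by
    rw [hν', rot_iter]
    convert hc using 2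
    exact Fin.ext (by simpa using hceq)
  set σ' : Fin h → Bool :=
    fun t => if t.val = c' then true else if t.val = 0 then false else ν' t with hσ'
  have hmove : JR ν' (rot σ') := step_move h0 ν' c' (by omega) hc'lt hν'0 hν'c'
  have r2 : Relation.ReflTransGen JR ν (rot σ') :=
    (reach_rot_iter h0 ν k).tail hmove
  have r3 : Relation.ReflTransGen JR ν (rot^[h - k] σ') := by
    have e : rot^[h - k] σ' = rot^[h - k - 1] (rot σ') := by
      rw [← Function.iterate_succ_apply]
      congr 1
      omega
    rw [e]
    exact r2.trans (reach_rot_iter h0 _ (h - k - 1))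
  have final : rot^[h - k] σ' = fun t => if t = a then false else if t = c then true else ν t := by
    funext t
    rw [rot_iter, hσ']
    simp only
    have hs : ((t.val + (h - k)) % h + k) % h = t.val := by
      rw [Nat.mod_add_mod]
      have e1 : t.val + (h - k) + k = t.val + h := by omega
      rw [e1, Nat.add_mod_right]
      exact Nat.mod_eq_of_lt t.isLt
    by_cases hta : t = a
    · subst hta
      have e0 : (t.val + (h - k)) % h = 0 := haeq
      rw [if_pos rfl]
      simp only [e0]
      rw [if_neg (show ¬(0:ℕ) = c' from fun e => hc'ne e.symm)]
      simp
    · have hne0 : (t.val + (h - k)) % h ≠ 0 := by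
        intro e
        apply hta
        apply Fin.ext
        exact add_mod_inj t.isLt hkh (by rw [e, haeq])
      rw [if_neg hta]
      by_cases htc : t = c
      · subst htc
        rw [if_pos hc'def.symm]
        simp
      · have hnec : (t.val + (h - k)) % h ≠ c' := by
          intro e
          apply htc
          apply Fin.ext
          exact add_mod_inj t.isLt c.isLt (by rw [e, hc'def])
        rw [if_neg htc, if_neg hnec, if_neg hne0, hν', rot_iter]
        congr 1
        exact Fin.ext (by simpa using hs)
  rw [final] at r3
  exact r3

lemma numZeros_swap {h : ℕ} (ν : Fin h → Bool) (a c : Fin h) (hac : a ≠ c)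
    (ha : ν a = true) (hc : ν c = false) :
    numZeros (fun t => if t = a then false else if t = c then true else ν t) = numZeros ν := by
  unfold numZeros
  have hset : (Finset.univ.filter
      (fun t => (if t = a then false else if t = c then true else ν t) = false))
      = insert a ((Finset.univ.filter (fun t => ν t = false)).erase c) := by
    ext t
    simp only [mem_filter, mem_univ, true_and, mem_insert, mem_erase]
    by_cases h1 : t = a
    · subst h1; simp
    · by_cases h2 : t = c
      · subst h2; simp [h1]
      · simp [h1, h2]
  rw [hset]
  have hcmem : c ∈ Finset.univ.filter (fun t => ν t = false) := by simp [hc]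
  have hanotmem : a ∉ (Finset.univ.filter (fun t => ν t = false)).erase c := by
    simp [ha]
  rw [Finset.card_insert_of_notMem hanotmem, Finset.card_erase_of_mem hcmem]
  have : 0 < (Finset.univ.filter (fun t => ν t = false)).card :=
    Finset.card_pos.mpr ⟨c, hcmem⟩
  omega

lemma reach_of_eq_zeros {h : ℕ} :
    ∀ n (ν ω : Fin h → Bool), numZeros ν = numZeros ω →
    (Finset.univ.filter (fun t => ν t ≠ ω t)).card ≤ n →
    Relation.ReflTransGen JR ν ω := by
  intro n
  induction n with
  | zero =>
    intro ν ω _ hcard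
    have he : ν = ω := by
      funext t
      by_contra hne
      have : t ∈ Finset.univ.filter (fun t => ν t ≠ ω t) := by simp [hne]
      have := Finset.card_pos.mpr ⟨t, this⟩
      omega
    rw [he]
  | succ n ih =>
    intro ν ω hz hcard
    by_cases he : ν = ω
    · rw [he]
    · -- find a with ν a = true, ω a = false and c with ν c = false, ω c = true
      set A := Finset.univ.filter (fun t => ν t = true ∧ ω t = false) with hA
      set C := Finset.univ.filter (fun t => ν t = false ∧ ω t = true) with hC
      have dν : (Finset.univ.filter (fun t => ν t = false ∧ ω t = false)).card + C.card
          = (Finset.univ.filter (fun t : Fin h => ν t = false)).card := by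
        have e1 : Finset.univ.filter (fun t => ν t = false ∧ ω t = false)
            = (Finset.univ.filter (fun t : Fin h => ν t = false)).filter
              (fun t => ω t = false) := by rw [Finset.filter_filter]
        have e2 : C = (Finset.univ.filter (fun t : Fin h => ν t = false)).filter
              (fun t => ¬ ω t = false) := by
          rw [hC, Finset.filter_filter]; ext t; simp
        rw [e1, e2]
        exact Finset.card_filter_add_card_filter_not (fun t => ω t = false)
      have dω : (Finset.univ.filter (fun t => ν t = false ∧ ω t = false)).card + A.card
          = (Finset.univ.filter (fun t : Fin h => ω t = false)).card := by
        have e1 : Finset.univ.filter (fun t => ν t = false ∧ ω t = false)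
            = (Finset.univ.filter (fun t : Fin h => ω t = false)).filter
              (fun t => ν t = false) := by rw [Finset.filter_filter]; ext t; simp; tauto
        have e2 : A = (Finset.univ.filter (fun t : Fin h => ω t = false)).filter
              (fun t => ¬ ν t = false) := by
          rw [hA, Finset.filter_filter]; ext t; simp; tauto
        rw [e1, e2]
        exact Finset.card_filter_add_card_filter_not (fun t => ν t = false)
      have hAC : A.card = C.card := by
        unfold numZeros at hz
        omega
      -- some mismatch exists
      have hne : ∃ t, ν t ≠ ω t := by
        by_contra hc
        push_neg at hc
        exact he (funext hc)
      obtain ⟨t0, ht0⟩ := hne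
      have hACne : A.Nonempty ∧ C.Nonempty := by
        have ht0' : t0 ∈ A ∨ t0 ∈ C := by
          rcases Bool.eq_false_or_eq_true (ν t0) with h1 | h1 <;>
            rcases Bool.eq_false_or_eq_true (ω t0) with h2 | h2
          · exact absurd (h1.trans h2.symm) ht0
          · left; rw [hA, Finset.mem_filter]; exact ⟨Finset.mem_univ _, h1, h2⟩
          · right; rw [hC, Finset.mem_filter]; exact ⟨Finset.mem_univ _, h1, h2⟩
          · exact absurd (h1.trans h2.symm) ht0
        rcases ht0' with hm | hm
        · have : 0 < C.card := by have := Finset.card_pos.mpr ⟨t0, hm⟩; omega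
          exact ⟨⟨t0, hm⟩, Finset.card_pos.mp this⟩
        · have : 0 < A.card := by have := Finset.card_pos.mpr ⟨t0, hm⟩; omega
          exact ⟨Finset.card_pos.mp (by have := Finset.card_pos.mpr ⟨t0, hm⟩; omega), ⟨t0, hm⟩⟩
      obtain ⟨⟨a, haA⟩, ⟨c, hcC⟩⟩ := hACne
      rw [hA, Finset.mem_filter] at haA
      rw [hC, Finset.mem_filter] at hcC
      obtain ⟨-, hνa, hωa⟩ := haA
      obtain ⟨-, hνc, hωc⟩ := hcC
      have hac : a ≠ c := by
        intro e; rw [e, hνc] at hνa; simp at hνa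
      set σ : Fin h → Bool := fun t => if t = a then false else if t = c then true else ν t
        with hσ
      have r1 : Relation.ReflTransGen JR ν σ := reach_swap ν a c hac hνa hνc
      have hzσ : numZeros σ = numZeros ω := by
        rw [hσ, numZeros_swap ν a c hac hνa hνc, hz]
      have hsub : Finset.univ.filter (fun t => σ t ≠ ω t)
          ⊆ (Finset.univ.filter (fun t => ν t ≠ ω t)).erase a := by
        intro t ht
        rw [Finset.mem_filter] at ht
        rw [Finset.mem_erase, Finset.mem_filter]
        obtain ⟨-, htσ⟩ := ht
        by_cases h1 : t = a
        · exfalso; apply htσ; subst h1; rw [hσ]; simp [hωa]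
        · by_cases h2 : t = c
          · exfalso; apply htσ; subst h2; rw [hσ]; simp [h1, hωc]
          · refine ⟨h1, Finset.mem_univ t, ?_⟩
            have : σ t = ν t := by rw [hσ]; simp [h1, h2]
            rwa [this] at htσ
      have hamem : a ∈ Finset.univ.filter (fun t => ν t ≠ ω t) := by
        simp only [Finset.mem_filter, Finset.mem_univ, true_and]
        rw [hνa, hωa]; simp
      have hcard' : (Finset.univ.filter (fun t => σ t ≠ ω t)).card ≤ n := by
        have h1 := Finset.card_le_card hsub
        have h2 := Finset.card_erase_of_mem hamem
        have h3 := Finset.card_pos.mpr ⟨a, hamem⟩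
        omega
      exact r1.trans (ih σ ω hzσ hcard')

/-- The standard juggling chain is irreducible: any state with `f` zeros can be reached
from any other by a finite sequence of legal transitions. -/
theorem stmt18 (h f : ℕ) (hf : f ≤ h) (ν ω : Fin h → Bool)
    (hν : numZeros ν = f) (hω : numZeros ω = f) :
    Relation.ReflTransGen
      (fun x y : Fin h → Bool =>
        (getB x 1 = false ∧ y = theta 0 x) ∨
        (getB x 1 = true ∧ ∃ j, 1 ≤ j ∧ j ≤ h ∧ getB x (j + 1) = false ∧ y = theta j x))
      ν ω := by
  exact reach_of_eq_zeros _ ν ω (hν.trans hω.symm) le_rfl
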